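/- arXiv:1906.06735 — 2 statements merged into one kernel-verified Lean document; each statement's English description precedes it below -/
import Mathlib

section
/- Define the linear operator Θ on the space of real arrays S = (S_{jl})_{0 ≤ j ≤ l ≤ N-1} by (ΘS)_{jl} = 2Γ_{jl} 1_{j≠l}(S_{jj}+S_{ll}-2S_{jl}) + ∑_{n∉{j,l}} [Γ_{ln}(S_{jn}-S_{jl}) + Γ_{jn}(S_{nl}-S_{jl})], with the convention that S_{jl} for j > l denotes S_{lj}. Then Θ is self-adjoint with respect to the inner product ⟨T, T̃⟩ = ∑_{0 ≤ j ≤ l ≤ N-1} T_{jl} T̃_{jl}. -/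
open Matrix Finset

/-- The second-moment coupling operator `Θ` acting on symmetric arrays
`S = (S_{jl})`, where the convention `S_{jl} = S_{lj}` for `j > l` is encoded by
working with symmetric functions `S : Fin N → Fin N → ℝ`. -/
def Theta {N : ℕ} (Γ : Matrix (Fin N) (Fin N) ℝ) (S : Fin N → Fin N → ℝ) :
    Fin N → Fin N → ℝ :=
  fun j l =>
    (if j ≠ l then 2 * Γ j l * (S j j + S l l - 2 * S j l) else 0)
      + ∑ n ∈ (Finset.univ.erase j).erase l,
          (Γ l n * (S j n - S j l) + Γ j n * (S n l - S j l))

/-- The inner product `⟨T, T̃⟩ = ∑_{0 ≤ j ≤ l ≤ N-1} T_{jl} T̃_{jl}` on the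
triangle. -/
def triInner {N : ℕ} (T T' : Fin N → Fin N → ℝ) : ℝ :=
  ∑ j, ∑ l, if j ≤ l then T j l * T' j l else 0

/-- Rewrite `Theta` with the inner sum extended to all of `univ`. -/
lemma theta_full {N : ℕ} (Γ : Matrix (Fin N) (Fin N) ℝ) (hsym : Γ.IsSymm)
    (S : Fin N → Fin N → ℝ) (j l : Fin N) :
    Theta Γ S j l = (if j ≠ l then Γ j l * (S j j + S l l - 2 * S j l) else 0)
      + ∑ n, (Γ l n * (S j n - S j l) + Γ j n * (S n l - S j l)) := by
  have hΓ : ∀ a b, Γ a b = Γ b a := fun a b => (hsym.apply a b).symm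
  simp only [Theta]
  by_cases h : j = l
  · subst h
    simp only [ne_eq, not_true_eq_false, if_false, Finset.erase_idem]
    rw [Finset.sum_erase_eq_sub (Finset.mem_univ j)]
    ring
  · have hl : l ∈ Finset.univ.erase j := Finset.mem_erase.2 ⟨Ne.symm h, Finset.mem_univ l⟩
    rw [Finset.sum_erase_eq_sub hl, Finset.sum_erase_eq_sub (Finset.mem_univ j)]
    simp only [ne_eq, h, not_false_eq_true, if_true]
    rw [hΓ l j]
    ring

/-- `Theta Γ S` is symmetric when `Γ` and `S` are. -/
lemma theta_symm {N : ℕ} (Γ : Matrix (Fin N) (Fin N) ℝ) (hsym : Γ.IsSymm)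
    (S : Fin N → Fin N → ℝ) (hS : ∀ j l, S j l = S l j) (j l : Fin N) :
    Theta Γ S j l = Theta Γ S l j := by
  have hΓ : ∀ a b, Γ a b = Γ b a := fun a b => (hsym.apply a b).symm
  rw [theta_full Γ hsym S j l, theta_full Γ hsym S l j]
  by_cases h : j = l
  · subst h; rfl
  · congr 1
    · simp only [ne_eq, h, Ne.symm h, not_false_eq_true, if_true]
      rw [hΓ l j, hS l j]; ring
    · refine Finset.sum_congr rfl fun n _ => ?_
      rw [hS l n, hS l j, hS n j]; ring

/-- A doubly-indexed antisymmetric family sums to zero. -/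
lemma antisym_sum {N : ℕ} {f : Fin N → Fin N → ℝ}
    (h : ∀ j l, f j l + f l j = 0) :
    ∑ j, ∑ l, f j l = 0 := by
  have h1 : (∑ j, ∑ l, f j l) = ∑ j, ∑ l, f l j := Finset.sum_comm
  have h2 : (∑ j, ∑ l, f j l) + (∑ j, ∑ l, f l j)
      = ∑ j, ∑ l, (f j l + f l j) := by
    rw [← Finset.sum_add_distrib]
    exact Finset.sum_congr rfl fun j _ => (Finset.sum_add_distrib).symm
  simp only [h, Finset.sum_const_zero] at h2
  linarith

/-- Swap the inner two indices in a triple sum. -/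
lemma swap23 {N : ℕ} (f : Fin N → Fin N → Fin N → ℝ) :
    ∑ j, ∑ l, ∑ n, f j l n = ∑ j, ∑ l, ∑ n, f j n l :=
  Finset.sum_congr rfl fun _ _ => Finset.sum_comm

/-- Swap the outer and inner indices in a triple sum. -/
lemma swap13 {N : ℕ} (f : Fin N → Fin N → Fin N → ℝ) :
    ∑ j, ∑ l, ∑ n, f j l n = ∑ j, ∑ l, ∑ n, f n l j := by
  calc ∑ j, ∑ l, ∑ n, f j l n
      = ∑ l, ∑ j, ∑ n, f j l n := Finset.sum_comm
    _ = ∑ l, ∑ n, ∑ j, f j l n := Finset.sum_congr rfl fun _ _ => Finset.sum_comm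
    _ = ∑ n, ∑ l, ∑ j, f j l n := Finset.sum_comm

/-- Triangle inner product of symmetric arrays in terms of the full double sum
and the diagonal sum. -/
lemma two_tri {N : ℕ} (A B : Fin N → Fin N → ℝ)
    (hA : ∀ j l, A j l = A l j) (hB : ∀ j l, B j l = B l j) :
    2 * triInner A B = (∑ j, ∑ l, A j l * B j l) + ∑ j, A j j * B j j := by
  have key : (∑ j, ∑ l, A j l * B j l)
      = (∑ j, ∑ l, if j ≤ l then A j l * B j l else 0)
        + ∑ j, ∑ l, if l < j then A j l * B j l else 0 := by
    rw [← Finset.sum_add_distrib]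
    refine Finset.sum_congr rfl fun j _ => ?_
    rw [← Finset.sum_add_distrib]
    refine Finset.sum_congr rfl fun l _ => ?_
    by_cases h : j ≤ l
    · simp [h, not_lt.2 h]
    · simp [h, lt_of_not_ge h]
  have h2 : (∑ j, ∑ l, if l < j then A j l * B j l else 0)
      = ∑ j, ∑ l, if j < l then A j l * B j l else 0 := by
    rw [Finset.sum_comm]
    exact Finset.sum_congr rfl fun j _ => Finset.sum_congr rfl fun l _ => by
      rw [hA l j, hB l j]
  have h3 : triInner A B
      = (∑ j, ∑ l, if j < l then A j l * B j l else 0) + ∑ j, A j j * B j j := by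
    unfold triInner
    rw [← Finset.sum_add_distrib]
    refine Finset.sum_congr rfl fun j _ => ?_
    have : (∑ l, if j = l then A j l * B j l else 0) = A j j * B j j :=
      Finset.sum_ite_eq Finset.univ j (fun l => A j l * B j l) |>.trans (by simp)
    rw [← this, ← Finset.sum_add_distrib]
    refine Finset.sum_congr rfl fun l _ => ?_
    rcases lt_trichotomy j l with h | h | h
    · simp [h.le, h, h.ne]
    · simp [h]
    · simp [not_le.2 h, h.asymm, h.ne']
  have hLE : triInner A B = ∑ j, ∑ l, if j ≤ l then A j l * B j l else 0 := rfl
  linarith [key, h2, h3, hLE]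

/-- `Θ` is self-adjoint with respect to the inner product
`⟨T, T̃⟩ = ∑_{j ≤ l} T_{jl} T̃_{jl}`. -/
theorem stmt8 {N : ℕ} (Γ : Matrix (Fin N) (Fin N) ℝ)
    (hsym : Γ.IsSymm) (hoff : ∀ j l : Fin N, j ≠ l → 0 ≤ Γ j l)
    (T T' : Fin N → Fin N → ℝ)
    (hT : ∀ j l, T j l = T l j) (hT' : ∀ j l, T' j l = T' l j) :
    triInner (Theta Γ T) T' = triInner T (Theta Γ T') := by
  have hΓ : ∀ a b, Γ a b = Γ b a := fun a b => (hsym.apply a b).symm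
  have hΘT := theta_symm Γ hsym T hT
  have hΘT' := theta_symm Γ hsym T' hT'
  have e1 := two_tri (Theta Γ T) T' hΘT hT'
  have e2 := two_tri T (Theta Γ T') hT hΘT'
  -- expand the LHS pieces
  have expand1 : (∑ j, ∑ l, Theta Γ T j l * T' j l)
      = (∑ j, ∑ l, Γ j l * (T j j + T l l - 2 * T j l) * T' j l)
        + ∑ j, ∑ l, ∑ n,
            ((Γ l n * (T j n - T j l) + Γ j n * (T n l - T j l)) * T' j l) := by
    rw [← Finset.sum_add_distrib]
    refine Finset.sum_congr rfl fun j _ => ?_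
    rw [← Finset.sum_add_distrib]
    refine Finset.sum_congr rfl fun l _ => ?_
    rw [theta_full Γ hsym T j l, add_mul, Finset.sum_mul]
    congr 1
    by_cases h : j = l
    · subst h; simp only [ne_eq, not_true_eq_false, if_false]; ring
    · simp [h]
  have expandD1 : (∑ j, Theta Γ T j j * T' j j)
      = ∑ j, ∑ l, ((Γ j l * (T j l - T j j) + Γ j l * (T l j - T j j)) * T' j j) := by
    refine Finset.sum_congr rfl fun j _ => ?_
    rw [theta_full Γ hsym T j j]
    simp only [ne_eq, not_true_eq_false, if_false, zero_add, Finset.sum_mul]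
  have expand2 : (∑ j, ∑ l, T j l * Theta Γ T' j l)
      = (∑ j, ∑ l, Γ j l * (T' j j + T' l l - 2 * T' j l) * T j l)
        + ∑ j, ∑ l, ∑ n,
            ((Γ l n * (T' j n - T' j l) + Γ j n * (T' n l - T' j l)) * T j l) := by
    rw [← Finset.sum_add_distrib]
    refine Finset.sum_congr rfl fun j _ => ?_
    rw [← Finset.sum_add_distrib]
    refine Finset.sum_congr rfl fun l _ => ?_
    rw [theta_full Γ hsym T' j l, mul_add, Finset.mul_sum]
    congr 1
    · by_cases h : j = l
      · subst h; simp only [ne_eq, not_true_eq_false, if_false, mul_zero]; ring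
      · simp only [ne_eq, h, not_false_eq_true, if_true]; ring
    · exact Finset.sum_congr rfl fun n _ => by ring
  have expandD2 : (∑ j, T j j * Theta Γ T' j j)
      = ∑ j, ∑ l, ((Γ j l * (T' j l - T' j j) + Γ j l * (T' l j - T' j j)) * T j j) := by
    refine Finset.sum_congr rfl fun j _ => ?_
    rw [theta_full Γ hsym T' j j]
    simp only [ne_eq, not_true_eq_false, if_false, zero_add, Finset.mul_sum]
    exact Finset.sum_congr rfl fun n _ => by ring
  -- triple sums are equal
  have hP : (∑ j, ∑ l, ∑ n,
        ((Γ l n * (T j n - T j l) + Γ j n * (T n l - T j l)) * T' j l))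
      = ∑ j, ∑ l, ∑ n,
        ((Γ l n * (T' j n - T' j l) + Γ j n * (T' n l - T' j l)) * T j l) := by
    have hA1 : (∑ j, ∑ l, ∑ n, Γ l n * T j n * T' j l)
        = ∑ j, ∑ l, ∑ n, Γ l n * T' j n * T j l := by
      rw [swap23 (fun j l n => Γ l n * T j n * T' j l)]
      exact Finset.sum_congr rfl fun j _ => Finset.sum_congr rfl fun l _ =>
        Finset.sum_congr rfl fun n _ => by rw [hΓ n l]; ring
    have hA3 : (∑ j, ∑ l, ∑ n, Γ j n * T n l * T' j l)
        = ∑ j, ∑ l, ∑ n, Γ j n * T' n l * T j l := by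
      rw [swap13 (fun j l n => Γ j n * T n l * T' j l)]
      exact Finset.sum_congr rfl fun j _ => Finset.sum_congr rfl fun l _ =>
        Finset.sum_congr rfl fun n _ => by rw [hΓ n j]; ring
    have split1 : (∑ j, ∑ l, ∑ n,
          ((Γ l n * (T j n - T j l) + Γ j n * (T n l - T j l)) * T' j l))
        = (∑ j, ∑ l, ∑ n, Γ l n * T j n * T' j l)
          - (∑ j, ∑ l, ∑ n, Γ l n * T j l * T' j l)
          + ((∑ j, ∑ l, ∑ n, Γ j n * T n l * T' j l)
            - ∑ j, ∑ l, ∑ n, Γ j n * T j l * T' j l) := by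
      simp only [← Finset.sum_sub_distrib, ← Finset.sum_add_distrib]
      exact Finset.sum_congr rfl fun j _ => Finset.sum_congr rfl fun l _ =>
        Finset.sum_congr rfl fun n _ => by ring
    have split2 : (∑ j, ∑ l, ∑ n,
          ((Γ l n * (T' j n - T' j l) + Γ j n * (T' n l - T' j l)) * T j l))
        = (∑ j, ∑ l, ∑ n, Γ l n * T' j n * T j l)
          - (∑ j, ∑ l, ∑ n, Γ l n * T j l * T' j l)
          + ((∑ j, ∑ l, ∑ n, Γ j n * T' n l * T j l)
            - ∑ j, ∑ l, ∑ n, Γ j n * T j l * T' j l) := by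
      simp only [← Finset.sum_sub_distrib, ← Finset.sum_add_distrib]
      exact Finset.sum_congr rfl fun j _ => Finset.sum_congr rfl fun l _ =>
        Finset.sum_congr rfl fun n _ => by ring
    rw [split1, split2, hA1, hA3]
  -- remaining double sums
  have hGD : (∑ j, ∑ l, Γ j l * (T j j + T l l - 2 * T j l) * T' j l)
        + (∑ j, ∑ l, ((Γ j l * (T j l - T j j) + Γ j l * (T l j - T j j)) * T' j j))
      = (∑ j, ∑ l, Γ j l * (T' j j + T' l l - 2 * T' j l) * T j l)
        + ∑ j, ∑ l, ((Γ j l * (T' j l - T' j j) + Γ j l * (T' l j - T' j j)) * T j j) := by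
    have h0 : (∑ j, ∑ l,
        (Γ j l * (T j j + T l l - 2 * T j l) * T' j l
          + (Γ j l * (T j l - T j j) + Γ j l * (T l j - T j j)) * T' j j
          - (Γ j l * (T' j j + T' l l - 2 * T' j l) * T j l
            + (Γ j l * (T' j l - T' j j) + Γ j l * (T' l j - T' j j)) * T j j))) = 0 := by
      refine antisym_sum fun j l => ?_
      rw [hΓ l j, hT l j, hT' l j]
      ring
    have hsplit : (∑ j, ∑ l,
        (Γ j l * (T j j + T l l - 2 * T j l) * T' j l
          + (Γ j l * (T j l - T j j) + Γ j l * (T l j - T j j)) * T' j j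
          - (Γ j l * (T' j j + T' l l - 2 * T' j l) * T j l
            + (Γ j l * (T' j l - T' j j) + Γ j l * (T' l j - T' j j)) * T j j)))
        = ((∑ j, ∑ l, Γ j l * (T j j + T l l - 2 * T j l) * T' j l)
            + (∑ j, ∑ l, ((Γ j l * (T j l - T j j) + Γ j l * (T l j - T j j)) * T' j j)))
          - ((∑ j, ∑ l, Γ j l * (T' j j + T' l l - 2 * T' j l) * T j l)
            + ∑ j, ∑ l, ((Γ j l * (T' j l - T' j j) + Γ j l * (T' l j - T' j j)) * T j j)) := by
      simp only [← Finset.sum_sub_distrib, ← Finset.sum_add_distrib]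
    rw [hsplit] at h0
    linarith
  rw [expand1] at e1
  rw [expandD1] at e1
  rw [expand2] at e2
  rw [expandD2] at e2
  linarith [hP, hGD, e1, e2]
end

section
/- In the weak-coupling regime Γ_{jl} = θΓ^{(1)}_{jl} with dissipation coefficients having a unique minimum at j⋆, the growth-rate difference satisfies μ - 2λ = -2θ² ∑_{j ≠ j⋆} (Γ^{(1)}_{j j⋆})²/(Λ_j - Λ_{j⋆}) + O(θ³); hence if Γ^{(1)} is irreducible then μ - 2λ < 0 for small θ. -/
open Matrix Finset

section General
variable {ι : Type*} [Fintype ι] [DecidableEq ι]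
set_option linter.unusedSectionVars false

/-- total absolute sum of a matrix -/
noncomputable def sumAbs (C : Matrix ι ι ℝ) : ℝ := ∑ a, ∑ b, |C a b|

lemma sumAbs_nonneg (C : Matrix ι ι ℝ) : 0 ≤ sumAbs C :=
  Finset.sum_nonneg fun _ _ => Finset.sum_nonneg fun _ _ => abs_nonneg _

lemma rowsum_le_sumAbs (C : Matrix ι ι ℝ) (i : ι) (s : Finset ι) :
    ∑ j ∈ s, |C i j| ≤ sumAbs C := by
  calc ∑ j ∈ s, |C i j| ≤ ∑ j, |C i j| :=
        Finset.sum_le_sum_of_subset_of_nonneg (Finset.subset_univ s)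
          (fun _ _ _ => abs_nonneg _)
    _ ≤ sumAbs C := Finset.single_le_sum (f := fun a => ∑ b, |C a b|)
        (fun _ _ => Finset.sum_nonneg fun _ _ => abs_nonneg _) (Finset.mem_univ i)

lemma entry_le_sumAbs (C : Matrix ι ι ℝ) (i j : ι) : |C i j| ≤ sumAbs C := by
  have := rowsum_le_sumAbs C i {j}
  simpa using this

lemma mulVec_abs_le (C : Matrix ι ι ℝ) (w : ι → ℝ) (h : ∀ k, |w k| ≤ 1) (i : ι) :
    |(C *ᵥ w) i| ≤ sumAbs C := by
  have h1 : |(C *ᵥ w) i| ≤ ∑ k, |C i k * w k| := by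
    simpa [Matrix.mulVec, dotProduct] using
      Finset.abs_sum_le_sum_abs (fun k => C i k * w k) Finset.univ
  refine h1.trans ?_
  calc ∑ k, |C i k * w k| ≤ ∑ k, |C i k| := by
        refine Finset.sum_le_sum fun k _ => ?_
        rw [abs_mul]
        exact mul_le_of_le_one_right (abs_nonneg _) (h k)
    _ ≤ sumAbs C := rowsum_le_sumAbs C i univ

lemma exists_max_abs (v : ι → ℝ) (hv : v ≠ 0) :
    ∃ i, v i ≠ 0 ∧ ∀ j, |v j| ≤ |v i| := by
  have hne : (Finset.univ : Finset ι).Nonempty := by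
    obtain ⟨i, hi⟩ := Function.ne_iff.mp hv
    exact ⟨i, Finset.mem_univ i⟩
  obtain ⟨i, _, hmax⟩ := Finset.exists_max_image Finset.univ (fun j => |v j|) hne
  refine ⟨i, ?_, fun j => hmax j (Finset.mem_univ j)⟩
  intro h0
  apply hv
  funext j
  have := hmax j (Finset.mem_univ j)
  rw [h0] at this
  have h2 : |v j| ≤ 0 := by simpa using this
  simpa using le_antisymm h2 (abs_nonneg _)

lemma sdd_det_ne_zero (A : Matrix ι ι ℝ)
    (h : ∀ i, ∑ j ∈ univ.erase i, |A i j| < |A i i|) : A.det ≠ 0 := by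
  intro hdet
  obtain ⟨v, hv, hAv⟩ := (Matrix.exists_mulVec_eq_zero_iff).mpr hdet
  obtain ⟨i, hvi, hmax⟩ := exists_max_abs v hv
  have hrow : ∑ j, A i j * v j = 0 := by
    have := congrFun hAv i
    simpa [Matrix.mulVec, dotProduct] using this
  have hsplit : A i i * v i = -∑ j ∈ univ.erase i, A i j * v j := by
    have h2 := Finset.add_sum_erase univ (fun j => A i j * v j) (Finset.mem_univ i)
    replace h2 : A i i * v i + ∑ j ∈ univ.erase i, A i j * v j = ∑ j, A i j * v j := h2
    linarith [h2, hrow]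
  have habs : |A i i| * |v i| ≤ (∑ j ∈ univ.erase i, |A i j|) * |v i| := by
    rw [← abs_mul, hsplit, abs_neg]
    calc |∑ j ∈ univ.erase i, A i j * v j| ≤ ∑ j ∈ univ.erase i, |A i j * v j| :=
          Finset.abs_sum_le_sum_abs _ _
      _ ≤ ∑ j ∈ univ.erase i, |A i j| * |v i| := by
          refine Finset.sum_le_sum fun j _ => ?_
          rw [abs_mul]
          exact mul_le_mul_of_nonneg_left (hmax j) (abs_nonneg _)
      _ = (∑ j ∈ univ.erase i, |A i j|) * |v i| := by rw [Finset.sum_mul]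
  have hvip : 0 < |v i| := abs_pos.mpr hvi
  have := (mul_le_mul_iff_of_pos_right hvip).mp habs
  exact absurd this (not_le.mpr (h i))

lemma sdd_det_mul_prod_pos (A : Matrix ι ι ℝ)
    (h : ∀ i, ∑ j ∈ univ.erase i, |A i j| < |A i i|) :
    0 < A.det * ∏ i, A i i := by
  set M : ℝ → Matrix ι ι ℝ := fun s => Matrix.of fun i j => if i = j then A i i else s * A i j
    with hM
  have hcont : Continuous fun s => (M s).det := by
    apply Continuous.matrix_det
    apply continuous_matrix
    intro i j
    by_cases hij : i = j <;> simp [hM, hij] <;> continuity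
  have hsdd : ∀ s : ℝ, |s| ≤ 1 → ∀ i, ∑ j ∈ univ.erase i, |M s i j| < |M s i i| := by
    intro s hs i
    have h1 : ∀ j ∈ univ.erase i, |M s i j| ≤ |A i j| := by
      intro j hj
      have hji : j ≠ i := Finset.ne_of_mem_erase hj
      have : M s i j = s * A i j := by simp [hM, (Ne.symm hji : ¬ i = j)]
      rw [this, abs_mul]
      exact mul_le_of_le_one_left (abs_nonneg _) hs
    have h2 : M s i i = A i i := by simp [hM]
    calc ∑ j ∈ univ.erase i, |M s i j| ≤ ∑ j ∈ univ.erase i, |A i j| :=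
          Finset.sum_le_sum h1
      _ < |A i i| := h i
      _ = |M s i i| := by rw [h2]
  have hne : ∀ s ∈ Set.Icc (0:ℝ) 1, (M s).det ≠ 0 := by
    intro s hs
    exact sdd_det_ne_zero _ (hsdd s (by rw [abs_of_nonneg hs.1]; exact hs.2))
  have hM1 : M 1 = A := by
    ext i j; by_cases hij : i = j <;> simp [hM, hij]
  have hM0 : (M 0).det = ∏ i, A i i := by
    have : M 0 = Matrix.diagonal (fun i => A i i) := by
      ext i j; by_cases hij : i = j <;> simp [hM, Matrix.diagonal, hij]
    rw [this, Matrix.det_diagonal]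
  have h0ne : (M 0).det ≠ 0 := hne 0 ⟨le_refl _, zero_le_one⟩
  have h1ne : (M 1).det ≠ 0 := hne 1 ⟨zero_le_one, le_refl _⟩
  rw [← hM0, ← hM1]
  rcases lt_or_gt_of_ne h0ne with hn | hp
  · rcases lt_or_gt_of_ne h1ne with hn1 | hp1
    · exact mul_pos_of_neg_of_neg hn1 hn
    · exfalso
      obtain ⟨c, _, hc⟩ := intermediate_value_Icc (zero_le_one (α := ℝ))
        (hcont.continuousOn) (Set.mem_Icc.mpr ⟨le_of_lt hn, le_of_lt hp1⟩)
      exact hne c (by assumption) hc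
  · rcases lt_or_gt_of_ne h1ne with hn1 | hp1
    · exfalso
      obtain ⟨c, _, hc⟩ := intermediate_value_Icc' (zero_le_one (α := ℝ))
        (hcont.continuousOn) (Set.mem_Icc.mpr ⟨le_of_lt hn1, le_of_lt hp⟩)
      exact hne c (by assumption) hc
    · exact mul_pos hp1 hp
lemma exists_eig_ge (D : ι → ℝ) (C : Matrix ι ι ℝ) (istar : ι) (g : ℝ) (hg : 0 < g)
    (hgap : ∀ i, i ≠ istar → D i + g ≤ D istar) (θ : ℝ)
    (hθ : |θ| * sumAbs C ≤ g / 8) :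
    ∃ ν, D istar - g/2 ≤ ν ∧ ∃ v, v ≠ 0 ∧
      (Matrix.diagonal D + θ • C) *ᵥ v = ν • v := by
  set M : Matrix ι ι ℝ := Matrix.diagonal D + θ • C with hMdef
  have hentry : ∀ (x : ℝ) i j,
      (x • (1 : Matrix ι ι ℝ) - M) i j = (if i = j then x - D i else 0) - θ * C i j := by
    intro x i j
    by_cases hij : i = j <;>
      simp [hMdef, Matrix.sub_apply, Matrix.add_apply, Matrix.smul_apply,
        Matrix.one_apply, Matrix.diagonal_apply, hij, smul_eq_mul] <;> ring
  have hθC : ∀ i j, |θ * C i j| ≤ g / 8 := by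
    intro i j
    rw [abs_mul]
    calc |θ| * |C i j| ≤ |θ| * sumAbs C :=
          mul_le_mul_of_nonneg_left (entry_le_sumAbs C i j) (abs_nonneg θ)
      _ ≤ g / 8 := hθ
  have hrowbd : ∀ (x : ℝ) i, ∑ j ∈ univ.erase i, |(x • (1 : Matrix ι ι ℝ) - M) i j| ≤ g / 8 := by
    intro x i
    have he : ∀ j ∈ univ.erase i, |(x • (1 : Matrix ι ι ℝ) - M) i j| = |θ| * |C i j| := by
      intro j hj
      have hji : ¬ i = j := fun hc => (Finset.ne_of_mem_erase hj) hc.symm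
      rw [hentry x i j, if_neg hji, zero_sub, abs_neg, abs_mul]
    rw [Finset.sum_congr rfl he, ← Finset.mul_sum]
    calc |θ| * ∑ j ∈ univ.erase i, |C i j| ≤ |θ| * sumAbs C :=
          mul_le_mul_of_nonneg_left (rowsum_le_sumAbs C i _) (abs_nonneg θ)
      _ ≤ g / 8 := hθ
  have hDle : ∀ i, D i ≤ D istar := by
    intro i
    by_cases hi : i = istar
    · rw [hi]
    · linarith [hgap i hi]
  have hcont : Continuous fun x : ℝ => (x • (1 : Matrix ι ι ℝ) - M).det := by
    apply Continuous.matrix_det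
    apply continuous_matrix
    intro i j
    have : (fun x : ℝ => (x • (1 : Matrix ι ι ℝ) - M) i j)
        = fun x => (if i = j then x - D i else 0) - θ * C i j := by
      funext x; exact hentry x i j
    rw [this]
    by_cases hij : i = j <;> simp [hij] <;> continuity
  -- value at the top point
  have hhi : 0 < ((D istar + g) • (1 : Matrix ι ι ℝ) - M).det := by
    set A := (D istar + g) • (1 : Matrix ι ι ℝ) - M with hA
    have hdiag : ∀ i, 7 * g / 8 ≤ A i i := by
      intro i
      rw [hA, hentry, if_pos rfl]
      have := hθC i i
      have h2 := hDle i
      have := abs_le.mp (hθC i i)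
      linarith
    have hsdd : ∀ i, ∑ j ∈ univ.erase i, |A i j| < |A i i| := by
      intro i
      have h1 := hrowbd (D istar + g) i
      have h2 := hdiag i
      have h3 : |A i i| = A i i := abs_of_pos (by linarith)
      rw [← hA] at h1
      rw [h3]
      linarith
    have hmp := sdd_det_mul_prod_pos A hsdd
    have hprod : 0 < ∏ i, A i i := Finset.prod_pos fun i _ => by linarith [hdiag i]
    nlinarith
  -- value at the midpoint
  have hmid : ((D istar - g/2) • (1 : Matrix ι ι ℝ) - M).det < 0 := by
    set A := (D istar - g/2) • (1 : Matrix ι ι ℝ) - M with hA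
    have hdiagstar : A istar istar ≤ -(3 * g / 8) := by
      rw [hA, hentry, if_pos rfl]
      have := abs_le.mp (hθC istar istar)
      linarith
    have hdiagoth : ∀ i, i ≠ istar → 3 * g / 8 ≤ A i i := by
      intro i hi
      rw [hA, hentry, if_pos rfl]
      have := abs_le.mp (hθC i i)
      have := hgap i hi
      linarith
    have hsdd : ∀ i, ∑ j ∈ univ.erase i, |A i j| < |A i i| := by
      intro i
      have h1 := hrowbd (D istar - g/2) i
      rw [← hA] at h1
      by_cases hi : i = istar
      · subst hi
        have h3 : |A i i| = -(A i i) := abs_of_neg (by linarith [hdiagstar])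
        rw [h3]; linarith [hdiagstar]
      · have h3 : |A i i| = A i i := abs_of_pos (by linarith [hdiagoth i hi])
        rw [h3]; linarith [hdiagoth i hi]
    have hmp := sdd_det_mul_prod_pos A hsdd
    have hprod : ∏ i, A i i < 0 := by
      have hsplit := Finset.mul_prod_erase univ (fun i => A i i) (Finset.mem_univ istar)
      have hrest : 0 < ∏ i ∈ univ.erase istar, A i i :=
        Finset.prod_pos fun i hi => by
          linarith [hdiagoth i (Finset.ne_of_mem_erase hi)]
      have : A istar istar * ∏ i ∈ univ.erase istar, A i i < 0 :=
        mul_neg_of_neg_of_pos (by linarith) hrest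
      rw [← hsplit]
      exact this
    nlinarith
  -- IVT
  have hle : D istar - g/2 ≤ D istar + g := by linarith
  obtain ⟨c, hcmem, hc⟩ := intermediate_value_Icc hle hcont.continuousOn
    (Set.mem_Icc.mpr ⟨le_of_lt hmid, le_of_lt hhi⟩)
  obtain ⟨v, hv, hvz⟩ := (Matrix.exists_mulVec_eq_zero_iff).mpr hc
  refine ⟨c, hcmem.1, v, hv, ?_⟩
  have : (c • (1 : Matrix ι ι ℝ) - M) *ᵥ v = c • v - M *ᵥ v := by
    rw [Matrix.sub_mulVec, Matrix.smul_mulVec, Matrix.one_mulVec]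
  rw [this] at hvz
  have := sub_eq_zero.mp hvz
  exact this.symm

lemma eig_est (D : ι → ℝ) (C : Matrix ι ι ℝ) (istar : ι) (g : ℝ) (hg : 0 < g)
    (hgap : ∀ i, i ≠ istar → D i + g ≤ D istar) (θ : ℝ)
    (hθ : |θ| * sumAbs C ≤ g / 8) (ν : ℝ) (v : ι → ℝ) (hv : v ≠ 0)
    (heig : (Matrix.diagonal D + θ • C) *ᵥ v = ν • v) (hν : D istar - g/2 ≤ ν) :
    v istar ≠ 0 ∧
    |ν - (D istar + θ * C istar istar
        + θ^2 * ∑ i ∈ univ.erase istar, C istar i * C i istar / (D istar - D i))|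
      ≤ (6 * sumAbs C ^ 3 / g^2) * |θ|^3 := by
  set E := sumAbs C with hE
  have hE0 : 0 ≤ E := sumAbs_nonneg C
  -- the basic row identity for any eigenvector u of the matrix
  have hkey : ∀ (u : ι → ℝ), (Matrix.diagonal D + θ • C) *ᵥ u = ν • u →
      ∀ i, (ν - D i) * u i = θ * (C *ᵥ u) i := by
    intro u hu i
    have h1 := congrFun hu i
    have h2 : ((Matrix.diagonal D + θ • C) *ᵥ u) i = D i * u i + θ * (C *ᵥ u) i := by
      rw [Matrix.add_mulVec, Matrix.smul_mulVec]
      simp [Matrix.mulVec_diagonal]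
    rw [h2] at h1
    rw [Pi.smul_apply, smul_eq_mul] at h1
    linarith [h1]
  have hgap2 : ∀ i, i ≠ istar → g / 2 ≤ ν - D i := by
    intro i hi
    have := hgap i hi
    linarith
  -- the maximal coordinate is at istar
  have hmaxstar : v istar ≠ 0 ∧ ∀ j, |v j| ≤ |v istar| := by
    obtain ⟨i0, hi0, hmax⟩ := exists_max_abs v hv
    have : i0 = istar := by
      by_contra hne
      have h1 := hkey v heig i0
      have h2 : |(C *ᵥ v) i0| ≤ E * |v i0| := by
        have hvpos : 0 < |v i0| := abs_pos.mpr hi0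
        have : ∀ k, |((|v i0|)⁻¹ • v) k| ≤ 1 := by
          intro k
          rw [Pi.smul_apply, smul_eq_mul, abs_mul, abs_inv, abs_abs]
          rw [← div_eq_inv_mul, div_le_one hvpos]
          exact hmax k
        have hb := mulVec_abs_le C ((|v i0|)⁻¹ • v) this i0
        rw [Matrix.mulVec_smul] at hb
        rw [Pi.smul_apply, smul_eq_mul, abs_mul, abs_inv, abs_abs] at hb
        calc |(C *ᵥ v) i0| = |v i0| * ((|v i0|)⁻¹ * |(C *ᵥ v) i0|) := by
              field_simp
          _ ≤ |v i0| * E := mul_le_mul_of_nonneg_left hb (abs_nonneg _)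
          _ = E * |v i0| := mul_comm _ _
      have h3 : g/2 * |v i0| ≤ |θ| * (E * |v i0|) := by
        calc g/2 * |v i0| ≤ (ν - D i0) * |v i0| :=
              mul_le_mul_of_nonneg_right (hgap2 i0 hne) (abs_nonneg _)
          _ = |(ν - D i0) * v i0| := by
              rw [abs_mul, abs_of_nonneg (by linarith [hgap2 i0 hne] : (0:ℝ) ≤ ν - D i0)]
          _ = |θ * (C *ᵥ v) i0| := by rw [h1]
          _ = |θ| * |(C *ᵥ v) i0| := abs_mul _ _
          _ ≤ |θ| * (E * |v i0|) := mul_le_mul_of_nonneg_left h2 (abs_nonneg _)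
      have h4 : |θ| * E ≤ g / 8 := hθ
      have hvpos : 0 < |v i0| := abs_pos.mpr hi0
      nlinarith
    subst this
    exact ⟨hi0, hmax⟩
  obtain ⟨hvstar, hmax⟩ := hmaxstar
  refine ⟨hvstar, ?_⟩
  -- normalize
  set w : ι → ℝ := (v istar)⁻¹ • v with hw
  have hwstar : w istar = 1 := by
    rw [hw, Pi.smul_apply, smul_eq_mul, inv_mul_cancel₀ hvstar]
  have hwb : ∀ k, |w k| ≤ 1 := by
    intro k
    rw [hw, Pi.smul_apply, smul_eq_mul, abs_mul, abs_inv]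
    rw [← div_eq_inv_mul, div_le_one (abs_pos.mpr hvstar)]
    exact hmax k
  have hweig : (Matrix.diagonal D + θ • C) *ᵥ w = ν • w := by
    rw [hw, Matrix.mulVec_smul, heig, smul_comm]
  have key := hkey w hweig
  have hCw : ∀ i, |(C *ᵥ w) i| ≤ E := fun i => mulVec_abs_le C w hwb i
  -- first order bound on ν
  have hν1 : |ν - D istar| ≤ |θ| * E := by
    have h1 := key istar
    rw [hwstar, mul_one] at h1
    rw [h1, abs_mul]
    exact mul_le_mul_of_nonneg_left (hCw istar) (abs_nonneg _)
  -- first order bounds on coordinates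
  have hw1 : ∀ i, i ≠ istar → |w i| ≤ 2 * E * |θ| / g := by
    intro i hi
    have h1 := key i
    have h2 : (g/2) * |w i| ≤ |θ| * E := by
      calc (g/2) * |w i| ≤ (ν - D i) * |w i| :=
            mul_le_mul_of_nonneg_right (hgap2 i hi) (abs_nonneg _)
        _ = |(ν - D i) * w i| := by
            rw [abs_mul, abs_of_nonneg (by linarith [hgap2 i hi] : (0:ℝ) ≤ ν - D i)]
        _ = |θ * (C *ᵥ w) i| := by rw [h1]
        _ = |θ| * |(C *ᵥ w) i| := abs_mul _ _
        _ ≤ |θ| * E := mul_le_mul_of_nonneg_left (hCw i) (abs_nonneg _)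
    rw [le_div_iff₀ hg]
    nlinarith [h2]
  -- expansion of (C *ᵥ w) i
  have hexp : ∀ i, (C *ᵥ w) i = C i istar + ∑ k ∈ univ.erase istar, C i k * w k := by
    intro i
    have : (C *ᵥ w) i = ∑ k, C i k * w k := by
      simp [Matrix.mulVec, dotProduct]
    rw [this, ← Finset.add_sum_erase univ (fun k => C i k * w k) (Finset.mem_univ istar),
      hwstar, mul_one]
  have hrest : ∀ i, |∑ k ∈ univ.erase istar, C i k * w k| ≤ E * (2 * E * |θ| / g) := by
    intro i
    calc |∑ k ∈ univ.erase istar, C i k * w k|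
        ≤ ∑ k ∈ univ.erase istar, |C i k * w k| := Finset.abs_sum_le_sum_abs _ _
      _ ≤ ∑ k ∈ univ.erase istar, |C i k| * (2 * E * |θ| / g) := by
          refine Finset.sum_le_sum fun k hk => ?_
          rw [abs_mul]
          exact mul_le_mul_of_nonneg_left (hw1 k (Finset.ne_of_mem_erase hk)) (abs_nonneg _)
      _ = (∑ k ∈ univ.erase istar, |C i k|) * (2 * E * |θ| / g) := by rw [Finset.sum_mul]
      _ ≤ E * (2 * E * |θ| / g) := by
          apply mul_le_mul_of_nonneg_right (rowsum_le_sumAbs C i _)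
          positivity
  -- second order bound on coordinates
  have hw2 : ∀ i, i ≠ istar →
      |w i - θ * C i istar / (D istar - D i)| ≤ 6 * E^2 * θ^2 / g^2 := by
    intro i hi
    have hden1 : (0:ℝ) < ν - D i := lt_of_lt_of_le (by linarith) (hgap2 i hi)
    have hden2 : (0:ℝ) < D istar - D i := by linarith [hgap i hi]
    have h1 := key i
    have hwi : w i = θ * (C i istar + ∑ k ∈ univ.erase istar, C i k * w k) / (ν - D i) := by
      rw [eq_div_iff hden1.ne']
      rw [← hexp i]
      linarith [h1]
    have hident : w i - θ * C i istar / (D istar - D i)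
        = θ * C i istar * (D istar - ν) / ((ν - D i) * (D istar - D i))
          + θ * (∑ k ∈ univ.erase istar, C i k * w k) / (ν - D i) := by
      rw [hwi]
      field_simp
      ring
    rw [hident]
    have hb1 : |θ * C i istar * (D istar - ν) / ((ν - D i) * (D istar - D i))|
        ≤ 2 * E^2 * θ^2 / g^2 := by
      rw [abs_div, abs_mul, abs_mul]
      rw [div_le_iff₀ (by positivity : (0:ℝ) < |(ν - D i) * (D istar - D i)|)]
      have habs : |(ν - D i) * (D istar - D i)| = (ν - D i) * (D istar - D i) := by
        rw [abs_of_pos (mul_pos hden1 hden2)]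
      rw [habs]
      have hb : |θ| * |C i istar| * |D istar - ν| ≤ |θ| * E * (|θ| * E) := by
        have e1 : |C i istar| ≤ E := entry_le_sumAbs C i istar
        have e2 : |D istar - ν| = |ν - D istar| := abs_sub_comm _ _
        calc |θ| * |C i istar| * |D istar - ν| ≤ |θ| * E * |D istar - ν| := by
              apply mul_le_mul_of_nonneg_right _ (abs_nonneg _)
              exact mul_le_mul_of_nonneg_left e1 (abs_nonneg _)
          _ ≤ |θ| * E * (|θ| * E) := by
              apply mul_le_mul_of_nonneg_left _ (by positivity)
              rw [e2]; exact hν1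
      have hd : g/2 * g ≤ (ν - D i) * (D istar - D i) := by
        apply mul_le_mul (hgap2 i hi) (by linarith [hgap i hi]) (by linarith) (by linarith [hgap2 i hi])
      calc |θ| * |C i istar| * |D istar - ν| ≤ |θ| * E * (|θ| * E) := hb
        _ = θ^2 * E^2 := by
            rw [show |θ| * E * (|θ| * E) = |θ| * |θ| * E^2 from by ring, abs_mul_abs_self]
            ring
        _ = 2 * E^2 * θ^2 / g^2 * (g/2 * g) := by field_simp
        _ ≤ 2 * E^2 * θ^2 / g^2 * ((ν - D i) * (D istar - D i)) := by
            apply mul_le_mul_of_nonneg_left hd (by positivity)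
    have hb2 : |θ * (∑ k ∈ univ.erase istar, C i k * w k) / (ν - D i)|
        ≤ 4 * E^2 * θ^2 / g^2 := by
      rw [abs_div, abs_mul]
      rw [div_le_iff₀ (by positivity : (0:ℝ) < |ν - D i|)]
      have habs : |ν - D i| = ν - D i := abs_of_pos hden1
      rw [habs]
      calc |θ| * |∑ k ∈ univ.erase istar, C i k * w k|
          ≤ |θ| * (E * (2 * E * |θ| / g)) :=
            mul_le_mul_of_nonneg_left (hrest i) (abs_nonneg _)
        _ = 2 * E^2 * (|θ| * |θ|) / g := by ring
        _ = 2 * E^2 * θ^2 / g := by rw [abs_mul_abs_self]; ring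
        _ = 4 * E^2 * θ^2 / g^2 * (g/2) := by field_simp; ring
        _ ≤ 4 * E^2 * θ^2 / g^2 * (ν - D i) := by
            apply mul_le_mul_of_nonneg_left (hgap2 i hi) (by positivity)
    calc |θ * C i istar * (D istar - ν) / ((ν - D i) * (D istar - D i))
          + θ * (∑ k ∈ univ.erase istar, C i k * w k) / (ν - D i)|
        ≤ _ + _ := abs_add_le _ _
      _ ≤ 2 * E^2 * θ^2 / g^2 + 4 * E^2 * θ^2 / g^2 := add_le_add hb1 hb2
      _ = 6 * E^2 * θ^2 / g^2 := by ring
  -- final assembly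
  have hfin : ν - (D istar + θ * C istar istar
      + θ^2 * ∑ i ∈ univ.erase istar, C istar i * C i istar / (D istar - D i))
      = θ * ∑ k ∈ univ.erase istar, C istar k * (w k - θ * C k istar / (D istar - D k)) := by
    have h1 := key istar
    rw [hwstar, mul_one] at h1
    rw [hexp istar] at h1
    have expand : θ * ∑ k ∈ univ.erase istar, C istar k * (w k - θ * C k istar / (D istar - D k))
        = θ * ∑ k ∈ univ.erase istar, C istar k * w k
          - θ^2 * ∑ k ∈ univ.erase istar, C istar k * C k istar / (D istar - D k) := by
      rw [Finset.mul_sum, Finset.mul_sum, Finset.mul_sum, ← Finset.sum_sub_distrib]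
      refine Finset.sum_congr rfl fun k hk => ?_
      ring
    rw [expand]
    linarith [h1]
  rw [hfin]
  have : |θ * ∑ k ∈ univ.erase istar, C istar k * (w k - θ * C k istar / (D istar - D k))|
      ≤ |θ| * (E * (6 * E^2 * θ^2 / g^2)) := by
    rw [abs_mul]
    apply mul_le_mul_of_nonneg_left _ (abs_nonneg _)
    calc |∑ k ∈ univ.erase istar, C istar k * (w k - θ * C k istar / (D istar - D k))|
        ≤ ∑ k ∈ univ.erase istar, |C istar k * (w k - θ * C k istar / (D istar - D k))| :=
          Finset.abs_sum_le_sum_abs _ _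
      _ ≤ ∑ k ∈ univ.erase istar, |C istar k| * (6 * E^2 * θ^2 / g^2) := by
          refine Finset.sum_le_sum fun k hk => ?_
          rw [abs_mul]
          exact mul_le_mul_of_nonneg_left (hw2 k (Finset.ne_of_mem_erase hk)) (abs_nonneg _)
      _ = (∑ k ∈ univ.erase istar, |C istar k|) * (6 * E^2 * θ^2 / g^2) := by
          rw [Finset.sum_mul]
      _ ≤ E * (6 * E^2 * θ^2 / g^2) := by
          apply mul_le_mul_of_nonneg_right (rowsum_le_sumAbs C istar _)
          positivity
  refine this.trans (le_of_eq ?_)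
  have hth : |θ|^3 = θ^2 * |θ| := by rw [pow_succ, sq_abs]
  rw [hth]
  field_simp

end General



/-- The diagonal dissipation operator `(Ψ S)_{jl} = (Λ_j + Λ_l) S_{jl}`. -/
def Psi {N : ℕ} (Λ : Fin N → ℝ) (S : Fin N → Fin N → ℝ) : Fin N → Fin N → ℝ :=
  fun j l => (Λ j + Λ l) * S j l

section Spec
variable {N : ℕ}

/-- `Theta` as a linear map on uncurried arrays. -/
noncomputable def thetaLin (Γ : Matrix (Fin N) (Fin N) ℝ) :
    ((Fin N × Fin N) → ℝ) →ₗ[ℝ] ((Fin N × Fin N) → ℝ) where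
  toFun u := fun p => Theta Γ (fun a b => u (a, b)) p.1 p.2
  map_add' u v := by
    funext p
    simp only [Pi.add_apply, Theta]
    have h1 : (if p.1 ≠ p.2 then
          2 * Γ p.1 p.2 * ((u (p.1, p.1) + v (p.1, p.1)) + (u (p.2, p.2) + v (p.2, p.2))
            - 2 * (u (p.1, p.2) + v (p.1, p.2))) else 0)
        = (if p.1 ≠ p.2 then 2 * Γ p.1 p.2 * (u (p.1, p.1) + u (p.2, p.2) - 2 * u (p.1, p.2)) else 0)
          + (if p.1 ≠ p.2 then 2 * Γ p.1 p.2 * (v (p.1, p.1) + v (p.2, p.2) - 2 * v (p.1, p.2)) else 0) := by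
      split_ifs <;> ring
    rw [h1]
    rw [show (∑ n ∈ (Finset.univ.erase p.1).erase p.2,
        (Γ p.2 n * ((u (p.1, n) + v (p.1, n)) - (u (p.1, p.2) + v (p.1, p.2)))
          + Γ p.1 n * ((u (n, p.2) + v (n, p.2)) - (u (p.1, p.2) + v (p.1, p.2)))))
      = (∑ n ∈ (Finset.univ.erase p.1).erase p.2,
          (Γ p.2 n * (u (p.1, n) - u (p.1, p.2)) + Γ p.1 n * (u (n, p.2) - u (p.1, p.2))))
        + (∑ n ∈ (Finset.univ.erase p.1).erase p.2,
          (Γ p.2 n * (v (p.1, n) - v (p.1, p.2)) + Γ p.1 n * (v (n, p.2) - v (p.1, p.2))))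
      from by
        rw [← Finset.sum_add_distrib]
        exact Finset.sum_congr rfl fun n _ => by ring]
    ring
  map_smul' c u := by
    funext p
    simp only [Pi.smul_apply, smul_eq_mul, RingHom.id_apply, Theta]
    have h1 : (if p.1 ≠ p.2 then
          2 * Γ p.1 p.2 * (c * u (p.1, p.1) + c * u (p.2, p.2) - 2 * (c * u (p.1, p.2))) else 0)
        = c * (if p.1 ≠ p.2 then 2 * Γ p.1 p.2 * (u (p.1, p.1) + u (p.2, p.2) - 2 * u (p.1, p.2)) else 0) := by
      split_ifs <;> ring
    rw [h1]
    rw [show (∑ n ∈ (Finset.univ.erase p.1).erase p.2,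
        (Γ p.2 n * (c * u (p.1, n) - c * u (p.1, p.2))
          + Γ p.1 n * (c * u (n, p.2) - c * u (p.1, p.2))))
      = c * (∑ n ∈ (Finset.univ.erase p.1).erase p.2,
          (Γ p.2 n * (u (p.1, n) - u (p.1, p.2)) + Γ p.1 n * (u (n, p.2) - u (p.1, p.2))))
      from by
        rw [Finset.mul_sum]
        exact Finset.sum_congr rfl fun n _ => by ring]
    ring

noncomputable def bigC (Γ : Matrix (Fin N) (Fin N) ℝ) :
    Matrix (Fin N × Fin N) (Fin N × Fin N) ℝ := LinearMap.toMatrix' (thetaLin Γ)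

lemma bigC_mulVec (Γ : Matrix (Fin N) (Fin N) ℝ) (u : (Fin N × Fin N) → ℝ) :
    bigC Γ *ᵥ u = thetaLin Γ u := by
  rw [bigC, ← Matrix.toLin'_apply, Matrix.toLin'_toMatrix']

lemma theta_smul_mat (θ : ℝ) (Γ : Matrix (Fin N) (Fin N) ℝ) (S : Fin N → Fin N → ℝ)
    (j l : Fin N) : Theta (θ • Γ) S j l = θ * Theta Γ S j l := by
  simp only [Theta, Matrix.smul_apply, smul_eq_mul]
  rw [mul_add]
  congr 1
  · split_ifs <;> ring
  · rw [Finset.mul_sum]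
    exact Finset.sum_congr rfl fun n _ => by ring

lemma theta_star_row (Γ : Matrix (Fin N) (Fin N) ℝ) (jstar : Fin N) (S : Fin N → Fin N → ℝ) :
    Theta Γ S jstar jstar
      = ∑ n ∈ univ.erase jstar, Γ jstar n * (S jstar n + S n jstar - 2 * S jstar jstar) := by
  simp only [Theta, ne_eq, not_true_eq_false, if_false, Finset.erase_idem, zero_add]
  exact Finset.sum_congr rfl fun n _ => by ring

lemma theta_delta (Γ : Matrix (Fin N) (Fin N) ℝ)
    (hrow : ∀ j, Γ j j = -∑ l ∈ univ.erase j, Γ j l) (jstar j l : Fin N) :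
    Theta Γ (fun a b => if (a, b) = (jstar, jstar) then (1:ℝ) else 0) j l
      = if j = jstar ∧ l = jstar then 2 * Γ jstar jstar
        else if j = jstar ∨ l = jstar then 2 * Γ j l else 0 := by
  by_cases hjl : j = l
  · subst hjl
    rw [theta_star_row]
    by_cases hj : j = jstar
    · subst hj
      have hterm : ∀ n ∈ univ.erase j, Γ j n *
          ((if ((j, n) : Fin N × Fin N) = (j, j) then (1:ℝ) else 0)
            + (if ((n, j) : Fin N × Fin N) = (j, j) then (1:ℝ) else 0)
            - 2 * (if ((j, j) : Fin N × Fin N) = (j, j) then (1:ℝ) else 0)) = -2 * Γ j n := by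
        intro n hn
        have hnj : n ≠ j := Finset.ne_of_mem_erase hn
        rw [if_neg (by simp [Prod.ext_iff, hnj]), if_neg (by simp [Prod.ext_iff, hnj]),
          if_pos rfl]
        ring
      rw [Finset.sum_congr rfl hterm]
      rw [show (∑ n ∈ univ.erase j, -2 * Γ j n) = -2 * ∑ n ∈ univ.erase j, Γ j n from by
        rw [Finset.mul_sum]]
      have hs : ∑ n ∈ univ.erase j, Γ j n = -Γ j j := by
        have := hrow j; linarith
      rw [hs]
      simp
    · have hz : (∑ n ∈ univ.erase j, Γ j n *
          ((if ((j, n) : Fin N × Fin N) = (jstar, jstar) then (1:ℝ) else 0)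
            + (if ((n, j) : Fin N × Fin N) = (jstar, jstar) then (1:ℝ) else 0)
            - 2 * (if ((j, j) : Fin N × Fin N) = (jstar, jstar) then (1:ℝ) else 0))) = 0 := by
        refine Finset.sum_eq_zero fun n hn => ?_
        rw [if_neg (by simp [Prod.ext_iff, hj]), if_neg (by simp [Prod.ext_iff, hj]),
          if_neg (by simp [Prod.ext_iff, hj])]
        ring
      rw [hz]
      simp [hj]
  · simp only [Theta, if_pos hjl]
    have hsum : (∑ n ∈ (univ.erase j).erase l,
        (Γ l n * ((if ((j, n) : Fin N × Fin N) = (jstar, jstar) then (1:ℝ) else 0)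
              - (if ((j, l) : Fin N × Fin N) = (jstar, jstar) then (1:ℝ) else 0))
          + Γ j n * ((if ((n, l) : Fin N × Fin N) = (jstar, jstar) then (1:ℝ) else 0)
              - (if ((j, l) : Fin N × Fin N) = (jstar, jstar) then (1:ℝ) else 0)))) = 0 := by
      refine Finset.sum_eq_zero fun n hn => ?_
      have hnl : n ≠ l := Finset.ne_of_mem_erase hn
      have hnj : n ≠ j := Finset.ne_of_mem_erase (Finset.mem_of_mem_erase hn)
      have e1 : ¬ ((j, n) : Fin N × Fin N) = (jstar, jstar) := by
        simp only [Prod.mk.injEq, not_and]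
        intro h1 h2
        exact hnj (h2.trans h1.symm)
      have e2 : ¬ ((n, l) : Fin N × Fin N) = (jstar, jstar) := by
        simp only [Prod.mk.injEq, not_and]
        intro h1 h2
        exact hnl (h1.trans h2.symm)
      have e3 : ¬ ((j, l) : Fin N × Fin N) = (jstar, jstar) := by
        simp only [Prod.mk.injEq, not_and]
        intro h1 h2
        exact hjl (h1.trans h2.symm)
      rw [if_neg e1, if_neg e2, if_neg e3]
      ring
    rw [hsum, add_zero]
    by_cases hj : j = jstar <;> by_cases hl : l = jstar
    · exact absurd (hj.trans hl.symm) hjl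
    · subst hj
      simp [Prod.ext_iff, hl, fun h : l = j => hjl h.symm]
    · subst hl
      simp [Prod.ext_iff, hj, hjl]
    · simp [Prod.ext_iff, hj, hl]

lemma bigC_entry (Γ : Matrix (Fin N) (Fin N) ℝ) (p q : Fin N × Fin N) :
    bigC Γ p q = Theta Γ (fun a b => if ((a, b) : Fin N × Fin N) = q then (1:ℝ) else 0) p.1 p.2 := by
  rw [bigC, LinearMap.toMatrix'_apply]
  show Theta Γ (fun a b => (Pi.single q (1:ℝ) : Fin N × Fin N → ℝ) (a, b)) p.1 p.2 = _
  simp only [Pi.single_apply]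

lemma bigC_col (Γ : Matrix (Fin N) (Fin N) ℝ)
    (hrow : ∀ j, Γ j j = -∑ l ∈ univ.erase j, Γ j l) (jstar : Fin N) (q : Fin N × Fin N) :
    bigC Γ q (jstar, jstar)
      = if q.1 = jstar ∧ q.2 = jstar then 2 * Γ jstar jstar
        else if q.1 = jstar ∨ q.2 = jstar then 2 * Γ q.1 q.2 else 0 := by
  rw [bigC_entry, theta_delta Γ hrow]

lemma bigC_row (Γ : Matrix (Fin N) (Fin N) ℝ)
    (hrow : ∀ j, Γ j j = -∑ l ∈ univ.erase j, Γ j l) (jstar : Fin N) (a b : Fin N) :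
    bigC Γ (jstar, jstar) (a, b)
      = (if ((a, b) : Fin N × Fin N) = (jstar, jstar) then 2 * Γ jstar jstar else 0)
        + (if a = jstar ∧ b ≠ jstar then Γ jstar b else 0)
        + (if b = jstar ∧ a ≠ jstar then Γ jstar a else 0) := by
  rw [bigC_entry]
  dsimp only
  rw [theta_star_row]
  by_cases ha : a = jstar <;> by_cases hb : b = jstar
  · -- a = jstar, b = jstar
    have hterm : ∀ n ∈ univ.erase jstar, Γ jstar n *
        ((if ((jstar, n) : Fin N × Fin N) = (a, b) then (1:ℝ) else 0)
          + (if ((n, jstar) : Fin N × Fin N) = (a, b) then (1:ℝ) else 0)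
          - 2 * (if ((jstar, jstar) : Fin N × Fin N) = (a, b) then (1:ℝ) else 0))
        = -2 * Γ jstar n := by
      intro n hn
      have hnj : n ≠ jstar := Finset.ne_of_mem_erase hn
      rw [if_neg (by simp only [Prod.mk.injEq, not_and]; intro _ h2; exact hnj (h2.trans hb)),
        if_neg (by simp only [Prod.mk.injEq, not_and]; intro h1 _; exact hnj (h1.trans ha)),
        if_pos (by rw [ha, hb])]
      ring
    rw [Finset.sum_congr rfl hterm]
    rw [show (∑ n ∈ univ.erase jstar, -2 * Γ jstar n) = -2 * ∑ n ∈ univ.erase jstar, Γ jstar n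
      from by rw [Finset.mul_sum]]
    have hs : ∑ n ∈ univ.erase jstar, Γ jstar n = -Γ jstar jstar := by
      have := hrow jstar; linarith
    rw [hs]
    rw [if_pos (by rw [ha, hb]), if_neg (fun h => h.2 hb), if_neg (fun h => h.2 ha)]
    ring
  · -- a = jstar, b ≠ jstar
    have hterm : ∀ n ∈ univ.erase jstar, Γ jstar n *
        ((if ((jstar, n) : Fin N × Fin N) = (a, b) then (1:ℝ) else 0)
          + (if ((n, jstar) : Fin N × Fin N) = (a, b) then (1:ℝ) else 0)
          - 2 * (if ((jstar, jstar) : Fin N × Fin N) = (a, b) then (1:ℝ) else 0))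
        = (if n = b then Γ jstar n else 0) := by
      intro n hn
      rw [show (if ((n, jstar) : Fin N × Fin N) = (a, b) then (1:ℝ) else 0) = 0 from
          if_neg (by simp only [Prod.mk.injEq, not_and]; intro _ h2; exact hb h2.symm),
        show (if ((jstar, jstar) : Fin N × Fin N) = (a, b) then (1:ℝ) else 0) = 0 from
          if_neg (by simp only [Prod.mk.injEq, not_and]; intro _ h2; exact hb h2.symm)]
      by_cases hnb : n = b
      · rw [if_pos (by rw [ha, hnb]), if_pos hnb]; ring
      · rw [if_neg (by simp only [Prod.mk.injEq, not_and]; intro _ h2; exact hnb h2), if_neg hnb]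
        ring
    rw [Finset.sum_congr rfl hterm, Finset.sum_ite_eq' (univ.erase jstar) b (fun n => Γ jstar n)]
    rw [if_pos (Finset.mem_erase.mpr ⟨hb, Finset.mem_univ b⟩)]
    rw [if_neg (by simp only [Prod.mk.injEq, not_and]; intro _ h2; exact hb h2),
      if_pos ⟨ha, hb⟩, if_neg (fun h => hb h.1)]
    ring
  · -- a ≠ jstar, b = jstar
    have hterm : ∀ n ∈ univ.erase jstar, Γ jstar n *
        ((if ((jstar, n) : Fin N × Fin N) = (a, b) then (1:ℝ) else 0)
          + (if ((n, jstar) : Fin N × Fin N) = (a, b) then (1:ℝ) else 0)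
          - 2 * (if ((jstar, jstar) : Fin N × Fin N) = (a, b) then (1:ℝ) else 0))
        = (if n = a then Γ jstar n else 0) := by
      intro n hn
      rw [if_neg (by simp only [Prod.mk.injEq, not_and]; intro h1 _; exact ha h1.symm)]
      rw [show (if ((jstar, jstar) : Fin N × Fin N) = (a, b) then (1:ℝ) else 0) = 0
        from if_neg (by simp only [Prod.mk.injEq, not_and]; intro h1 _; exact ha h1.symm)]
      by_cases hna : n = a
      · rw [if_pos (by rw [hb, hna]), if_pos hna]; ring
      · rw [if_neg (by simp only [Prod.mk.injEq, not_and]; intro h1 _; exact hna h1), if_neg hna]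
        ring
    rw [Finset.sum_congr rfl hterm, Finset.sum_ite_eq' (univ.erase jstar) a (fun n => Γ jstar n)]
    rw [if_pos (Finset.mem_erase.mpr ⟨ha, Finset.mem_univ a⟩)]
    rw [if_neg (by simp only [Prod.mk.injEq, not_and]; intro h1 _; exact ha h1),
      if_neg (fun h => ha h.1), if_pos ⟨hb, ha⟩]
    ring
  · -- neither
    have hterm : ∀ n ∈ univ.erase jstar, Γ jstar n *
        ((if ((jstar, n) : Fin N × Fin N) = (a, b) then (1:ℝ) else 0)
          + (if ((n, jstar) : Fin N × Fin N) = (a, b) then (1:ℝ) else 0)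
          - 2 * (if ((jstar, jstar) : Fin N × Fin N) = (a, b) then (1:ℝ) else 0)) = 0 := by
      intro n hn
      rw [if_neg (by simp only [Prod.mk.injEq, not_and]; intro h1 _; exact ha h1.symm),
        if_neg (by simp only [Prod.mk.injEq, not_and]; intro _ h2; exact hb h2.symm),
        if_neg (by simp only [Prod.mk.injEq, not_and]; intro h1 _; exact ha h1.symm)]
      ring
    rw [Finset.sum_congr rfl hterm, Finset.sum_const_zero]
    rw [if_neg (by simp only [Prod.mk.injEq, not_and]; intro h1 _; exact ha h1),
      if_neg (fun h => ha h.1), if_neg (fun h => hb h.1)]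
    norm_num

lemma theta_swap (Γ : Matrix (Fin N) (Fin N) ℝ) (hs : Γ.IsSymm) (S : Fin N → Fin N → ℝ)
    (j l : Fin N) : Theta Γ (fun a b => S b a) j l = Theta Γ S l j := by
  have hΓ : ∀ a b, Γ a b = Γ b a := fun a b => hs.apply b a
  simp only [Theta]
  congr 1
  · by_cases hjl : j = l
    · subst hjl
      simp
    · rw [if_pos hjl, if_pos (fun h => hjl h.symm)]
      rw [hΓ j l]
      ring
  · rw [show (univ.erase l).erase j = (univ.erase j).erase l from Finset.erase_right_comm]
    exact Finset.sum_congr rfl fun n _ => by ring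

lemma rep_lemma (Γ : Matrix (Fin N) (Fin N) ℝ) (Λ : Fin N → ℝ) (θ : ℝ)
    (v : (Fin N × Fin N) → ℝ) (j l : Fin N) :
    ((Matrix.diagonal (fun p : Fin N × Fin N => -(Λ p.1 + Λ p.2)) + θ • bigC Γ) *ᵥ v) (j, l)
      = Theta (θ • Γ) (fun a b => v (a, b)) j l - Psi Λ (fun a b => v (a, b)) j l := by
  rw [Matrix.add_mulVec, Matrix.smul_mulVec, Pi.add_apply, Pi.smul_apply, bigC_mulVec]
  rw [Matrix.mulVec_diagonal]
  rw [theta_smul_mat]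
  have : thetaLin Γ v (j, l) = Theta Γ (fun a b => v (a, b)) j l := rfl
  rw [smul_eq_mul, this, Psi]
  ring

end Spec

/-- weak coupling `Γ_{jl} = θΓ¹_{jl}` and dissipation with unique
minimum at `j⋆`: `μ - 2λ = -2θ² ∑_{j≠j⋆} (Γ¹_{jj⋆})²/(Λ_j - Λ_{j⋆}) + O(θ³)`;
hence if `Γ¹` is irreducible then `μ - 2λ < 0` for small `θ > 0`. -/
theorem stmt11 {N : ℕ} (hN : 2 ≤ N) (Γ1 : Matrix (Fin N) (Fin N) ℝ)
    (hsym : Γ1.IsSymm)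
    (hoff : ∀ j l : Fin N, j ≠ l → 0 ≤ Γ1 j l)
    (hrow : ∀ j : Fin N, Γ1 j j = -∑ l ∈ Finset.univ.erase j, Γ1 j l)
    (Λ : Fin N → ℝ) (hΛ : ∀ j, 0 ≤ Λ j) (jstar : Fin N)
    (hmin : ∀ j : Fin N, j ≠ jstar → Λ jstar < Λ j)
    (lam mu : ℝ → ℝ)
    (hlam_eig : ∀ θ : ℝ, ∃ v : Fin N → ℝ, v ≠ 0 ∧
      (θ • Γ1 - Matrix.diagonal Λ).mulVec v = (-lam θ) • v)
    (hlam_top : ∀ θ : ℝ, ∀ μ' : ℝ,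
      (∃ v : Fin N → ℝ, v ≠ 0 ∧ (θ • Γ1 - Matrix.diagonal Λ).mulVec v = μ' • v) →
      μ' ≤ -lam θ)
    (hmu_eig : ∀ θ : ℝ, ∃ S : Fin N → Fin N → ℝ, S ≠ 0 ∧ (∀ j l, S j l = S l j) ∧
      (fun j l => Theta (θ • Γ1) S j l - Psi Λ S j l) = fun j l => (-mu θ) • S j l)
    (hmu_top : ∀ θ : ℝ, ∀ μ' : ℝ,
      (∃ S : Fin N → Fin N → ℝ, S ≠ 0 ∧ (∀ j l, S j l = S l j) ∧
        (fun j l => Theta (θ • Γ1) S j l - Psi Λ S j l) = fun j l => μ' • S j l) →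
      μ' ≤ -mu θ) :
    ((fun θ : ℝ => mu θ - 2 * lam θ
        + 2 * θ ^ 2 * ∑ j ∈ Finset.univ.erase jstar,
            (Γ1 j jstar) ^ 2 / (Λ j - Λ jstar))
      =O[nhds 0] (fun θ : ℝ => θ ^ 3))
    ∧ ((∀ j l : Fin N, Relation.ReflTransGen (fun a b => 0 < Γ1 a b) j l) →
        ∃ θ0 > (0 : ℝ), ∀ θ : ℝ, 0 < θ → θ < θ0 → mu θ - 2 * lam θ < 0) := by
  classical
  -- the erased set is nonempty
  have hNE : (univ.erase jstar).Nonempty := by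
    have hcard : 1 < Fintype.card (Fin N) := by simp; omega
    obtain ⟨j, hj⟩ := Fintype.exists_ne_of_one_lt_card hcard jstar
    exact ⟨j, Finset.mem_erase.mpr ⟨hj, Finset.mem_univ j⟩⟩
  -- the spectral gap
  set g : ℝ := (univ.erase jstar).inf' hNE (fun j => Λ j - Λ jstar) with hgdef
  have hg : 0 < g := by
    rw [hgdef, Finset.lt_inf'_iff]
    intro j hj
    have := hmin j (Finset.ne_of_mem_erase hj)
    linarith
  have hgle : ∀ j, j ≠ jstar → Λ jstar + g ≤ Λ j := by
    intro j hj
    have h1 : g ≤ Λ j - Λ jstar := by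
      rw [hgdef]
      exact Finset.inf'_le _ (Finset.mem_erase.mpr ⟨hj, Finset.mem_univ j⟩)
    linarith
  have hΛle : ∀ j, Λ jstar ≤ Λ j := by
    intro j
    by_cases h : j = jstar
    · rw [h]
    · linarith [hmin j h]
  -- the two diagonal-plus-perturbation systems
  set D1 : Fin N → ℝ := fun j => -Λ j with hD1
  have hgap1 : ∀ j : Fin N, j ≠ jstar → D1 j + g ≤ D1 jstar := by
    intro j hj
    have := hgle j hj
    simp only [hD1]
    linarith
  set D2 : Fin N × Fin N → ℝ := fun p => -(Λ p.1 + Λ p.2) with hD2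
  set C2 : Matrix (Fin N × Fin N) (Fin N × Fin N) ℝ := bigC Γ1 with hC2
  have hgap2 : ∀ q : Fin N × Fin N, q ≠ (jstar, jstar) → D2 q + g ≤ D2 (jstar, jstar) := by
    intro q hq
    have hone : q.1 ≠ jstar ∨ q.2 ≠ jstar := by
      by_contra h
      push_neg at h
      exact hq (Prod.ext h.1 h.2)
    simp only [hD2]
    rcases hone with h | h
    · have := hgle q.1 h; have := hΛle q.2; linarith
    · have := hgle q.2 h; have := hΛle q.1; linarith
  have hmat1 : ∀ θ : ℝ, θ • Γ1 - Matrix.diagonal Λ = Matrix.diagonal D1 + θ • Γ1 := by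
    intro θ
    ext i j
    by_cases h : i = j <;>
      simp [Matrix.sub_apply, Matrix.add_apply, Matrix.smul_apply, Matrix.diagonal_apply, h,
        smul_eq_mul, hD1] <;> ring
  -- size constants
  set E1 : ℝ := sumAbs Γ1 with hE1
  set E2 : ℝ := sumAbs C2 with hE2
  have hE1n : 0 ≤ E1 := sumAbs_nonneg _
  have hE2n : 0 ≤ E2 := sumAbs_nonneg _
  set θ0 : ℝ := g / (8 * (E1 + E2 + 1)) with hθ0def
  have hθ0 : 0 < θ0 := by
    rw [hθ0def]
    positivity
  have hsmall1 : ∀ θ : ℝ, |θ| ≤ θ0 → |θ| * E1 ≤ g / 8 := by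
    intro θ h
    calc |θ| * E1 ≤ θ0 * E1 := mul_le_mul_of_nonneg_right h hE1n
      _ ≤ g / 8 := by
        rw [hθ0def, div_mul_eq_mul_div, div_le_div_iff₀ (by positivity) (by norm_num)]
        nlinarith
  have hsmall2 : ∀ θ : ℝ, |θ| ≤ θ0 → |θ| * E2 ≤ g / 8 := by
    intro θ h
    calc |θ| * E2 ≤ θ0 * E2 := mul_le_mul_of_nonneg_right h hE2n
      _ ≤ g / 8 := by
        rw [hθ0def, div_mul_eq_mul_div, div_le_div_iff₀ (by positivity) (by norm_num)]
        nlinarith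
  set Ksum : ℝ := ∑ j ∈ Finset.univ.erase jstar, (Γ1 j jstar) ^ 2 / (Λ j - Λ jstar) with hKsum
  set K1 : ℝ := 6 * E1 ^ 3 / g ^ 2 with hK1
  set K2 : ℝ := 6 * E2 ^ 3 / g ^ 2 with hK2
  have hK1n : 0 ≤ K1 := by rw [hK1]; positivity
  have hK2n : 0 ≤ K2 := by rw [hK2]; positivity
  -- entry and sum computations for the pair system
  have hsym' : ∀ a b, Γ1 a b = Γ1 b a := fun a b => hsym.apply b a
  have hc11 : C2 (jstar, jstar) (jstar, jstar) = 2 * Γ1 jstar jstar := by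
    rw [hC2, bigC_row Γ1 hrow jstar jstar jstar]
    simp
  have hsum1 : ∀ θ : ℝ, D1 jstar + θ * Γ1 jstar jstar
      + θ ^ 2 * ∑ i ∈ univ.erase jstar, Γ1 jstar i * Γ1 i jstar / (D1 jstar - D1 i)
      = -Λ jstar + θ * Γ1 jstar jstar + θ ^ 2 * Ksum := by
    intro θ
    have : ∑ i ∈ univ.erase jstar, Γ1 jstar i * Γ1 i jstar / (D1 jstar - D1 i) = Ksum := by
      rw [hKsum]
      refine Finset.sum_congr rfl fun i hi => ?_
      rw [show D1 jstar - D1 i = Λ i - Λ jstar from by simp [hD1]; ring]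
      rw [show Γ1 jstar i = Γ1 i jstar from hsym' jstar i]
      rw [sq]
    rw [this]
  have hsum2 : ∑ q ∈ univ.erase (jstar, jstar),
      C2 (jstar, jstar) q * C2 q (jstar, jstar) / (D2 (jstar, jstar) - D2 q) = 4 * Ksum := by
    set f : Fin N → ℝ := fun j => 2 * Γ1 jstar j ^ 2 / (Λ j - Λ jstar) with hf
    set F : Fin N × Fin N → ℝ := fun q =>
      (if q.1 = jstar ∧ q.2 ≠ jstar then f q.2 else 0)
        + (if q.2 = jstar ∧ q.1 ≠ jstar then f q.1 else 0) with hF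
    have claim1 : ∀ q ∈ univ.erase (jstar, jstar),
        C2 (jstar, jstar) q * C2 q (jstar, jstar) / (D2 (jstar, jstar) - D2 q) = F q := by
      intro q hq
      obtain ⟨a, b⟩ := q
      have hab : ¬ ((a, b) : Fin N × Fin N) = (jstar, jstar) := Finset.ne_of_mem_erase hq
      rw [hC2, bigC_row Γ1 hrow jstar a b, bigC_col Γ1 hrow jstar (a, b)]
      by_cases ha : a = jstar <;> by_cases hb : b = jstar
      · exact absurd (by rw [ha, hb]) hab
      · rw [if_neg hab, if_pos (show a = jstar ∧ b ≠ jstar from ⟨ha, hb⟩),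
          if_neg (show ¬ (b = jstar ∧ a ≠ jstar) from fun h => hb h.1)]
        dsimp only
        rw [if_neg (show ¬ (a = jstar ∧ b = jstar) from fun h => hb h.2),
          if_pos (Or.inl ha)]
        rw [hF]
        dsimp only
        rw [if_pos (show a = jstar ∧ b ≠ jstar from ⟨ha, hb⟩),
          if_neg (show ¬ (b = jstar ∧ a ≠ jstar) from fun h => hb h.1)]
        rw [hD2, hf]
        dsimp only
        rw [ha]
        rw [show (-(Λ jstar + Λ jstar) - -(Λ jstar + Λ b)) = Λ b - Λ jstar from by ring]
        ring
      · rw [if_neg hab, if_neg (show ¬ (a = jstar ∧ b ≠ jstar) from fun h => ha h.1),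
          if_pos (show b = jstar ∧ a ≠ jstar from ⟨hb, ha⟩)]
        dsimp only
        rw [if_neg (show ¬ (a = jstar ∧ b = jstar) from fun h => ha h.1),
          if_pos (Or.inr hb)]
        rw [hF]
        dsimp only
        rw [if_neg (show ¬ (a = jstar ∧ b ≠ jstar) from fun h => ha h.1),
          if_pos (show b = jstar ∧ a ≠ jstar from ⟨hb, ha⟩)]
        rw [hD2, hf]
        dsimp only
        rw [hb]
        rw [show (-(Λ jstar + Λ jstar) - -(Λ a + Λ jstar)) = Λ a - Λ jstar from by ring]
        rw [show Γ1 a jstar = Γ1 jstar a from hsym' a jstar]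
        ring
      · rw [if_neg hab, if_neg (show ¬ (a = jstar ∧ b ≠ jstar) from fun h => ha h.1),
          if_neg (show ¬ (b = jstar ∧ a ≠ jstar) from fun h => hb h.1)]
        rw [hF]
        dsimp only
        rw [if_neg (show ¬ (a = jstar ∧ b ≠ jstar) from fun h => ha h.1),
          if_neg (show ¬ (b = jstar ∧ a ≠ jstar) from fun h => hb h.1)]
        ring
    rw [Finset.sum_congr rfl claim1]
    have hF0 : F (jstar, jstar) = 0 := by
      rw [hF]
      simp
    rw [Finset.sum_erase _ hF0]
    -- sum over the whole product space
    have hT : ∑ q : Fin N × Fin N, F q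
        = (∑ b ∈ univ.erase jstar, f b) + (∑ a ∈ univ.erase jstar, f a) := by
      rw [Fintype.sum_prod_type]
      have hsplit : ∀ a : Fin N, (∑ b, F (a, b))
          = (if a = jstar then ∑ b ∈ univ.erase jstar, f b else 0)
            + (if a ≠ jstar then f a else 0) := by
        intro a
        rw [hF]
        simp only
        rw [Finset.sum_add_distrib]
        congr 1
        · by_cases ha : a = jstar
          · rw [if_pos ha]
            rw [show (∑ b, if a = jstar ∧ b ≠ jstar then f b else 0)
                = ∑ b, if b ≠ jstar then f b else 0 from
              Finset.sum_congr rfl fun b _ => by simp [ha]]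
            rw [← Finset.sum_filter, Finset.filter_ne']
          · rw [if_neg ha]
            exact Finset.sum_eq_zero fun b _ => by simp [ha]
        · by_cases ha : a = jstar
          · rw [if_neg (fun h => h ha)]
            exact Finset.sum_eq_zero fun b _ => by simp [ha]
          · rw [if_pos ha]
            have : ∀ b : Fin N, (if b = jstar ∧ a ≠ jstar then f a else 0)
                = if b = jstar then f a else 0 := by
              intro b
              by_cases hb : b = jstar <;> simp [hb, ha]
            rw [Finset.sum_congr rfl fun b _ => this b]
            rw [Finset.sum_ite_eq' univ jstar (fun _ => f a)]
            simp
      rw [Finset.sum_congr rfl fun a _ => hsplit a]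
      rw [Finset.sum_add_distrib]
      congr 1
      · rw [Finset.sum_ite_eq' univ jstar (fun _ => ∑ b ∈ univ.erase jstar, f b)]
        simp
      · rw [← Finset.sum_filter]
        rw [show (univ.filter fun a : Fin N => a ≠ jstar) = univ.erase jstar from
          Finset.filter_ne' univ jstar]
    rw [hT, hKsum]
    have hfs : ∑ j ∈ univ.erase jstar, f j
        = 2 * ∑ j ∈ univ.erase jstar, Γ1 j jstar ^ 2 / (Λ j - Λ jstar) := by
      rw [Finset.mul_sum]
      refine Finset.sum_congr rfl fun j hj => ?_
      rw [hf]
      dsimp only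
      rw [show Γ1 jstar j = Γ1 j jstar from hsym' jstar j]
      ring
    rw [hfs]
    ring
  -- the per-θ estimate
  have main : ∀ θ : ℝ, |θ| ≤ θ0 →
      |mu θ - 2 * lam θ + 2 * θ ^ 2 * Ksum| ≤ (K2 + 2 * K1) * |θ| ^ 3 := by
    intro θ hθabs
    have h1small := hsmall1 θ hθabs
    have h2small := hsmall2 θ hθabs
    -- the λ system
    obtain ⟨ν1, hν1ge, v1, hv1, heig1⟩ :=
      exists_eig_ge D1 Γ1 jstar g hg hgap1 θ (by rw [← hE1]; exact h1small)
    have hν1le : ν1 ≤ -lam θ := by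
      refine hlam_top θ ν1 ⟨v1, hv1, ?_⟩
      rw [hmat1 θ]
      exact heig1
    obtain ⟨vl, hvl, heigl⟩ := hlam_eig θ
    have heigl' : (Matrix.diagonal D1 + θ • Γ1) *ᵥ vl = (-lam θ) • vl := by
      rw [← hmat1]
      exact heigl
    have hlamge : D1 jstar - g / 2 ≤ -lam θ := le_trans hν1ge hν1le
    obtain ⟨-, hlam_est⟩ := eig_est D1 Γ1 jstar g hg hgap1 θ (by rw [← hE1]; exact h1small)
      (-lam θ) vl hvl heigl' hlamge
    -- the μ system
    obtain ⟨ν2, hν2ge, v2, hv2, heig2⟩ :=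
      exists_eig_ge D2 C2 (jstar, jstar) g hg hgap2 θ (by rw [← hE2]; exact h2small)
    obtain ⟨hv2star, -⟩ := eig_est D2 C2 (jstar, jstar) g hg hgap2 θ
      (by rw [← hE2]; exact h2small) ν2 v2 hv2 heig2 hν2ge
    -- symmetrize the eigenvector
    have hΓθsym : (θ • Γ1).IsSymm := by
      rw [Matrix.IsSymm, Matrix.transpose_smul, hsym]
    set S2 : Fin N → Fin N → ℝ := fun a b => v2 (a, b) + v2 (b, a) with hS2
    have hS2sym : ∀ a b, S2 a b = S2 b a := by
      intro a b
      rw [hS2]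
      ring
    have hS2ne : S2 ≠ 0 := by
      intro h
      have h2 : S2 jstar jstar = 0 := by rw [h]; rfl
      rw [hS2] at h2
      simp only at h2
      exact hv2star (by linarith)
    have hswapeig : ∀ p : Fin N × Fin N,
        ((Matrix.diagonal D2 + θ • C2) *ᵥ (fun q => v2 (q.2, q.1))) p = ν2 * v2 (p.2, p.1) := by
      rintro ⟨j, l⟩
      rw [hC2, rep_lemma Γ1 Λ θ _ j l]
      have hsw : Theta (θ • Γ1) (fun a b => v2 (b, a)) j l
          = Theta (θ • Γ1) (fun a b => v2 (a, b)) l j :=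
        theta_swap (θ • Γ1) hΓθsym (fun a b => v2 (a, b)) j l
      rw [hsw]
      have hback := rep_lemma Γ1 Λ θ v2 l j
      rw [← hC2] at hback
      have heigll := congrFun heig2 (l, j)
      rw [hback] at heigll
      have hPsi : Psi Λ (fun a b => v2 (b, a)) j l = Psi Λ (fun a b => v2 (a, b)) l j := by
        simp only [Psi]
        ring
      rw [hPsi]
      have : Theta (θ • Γ1) (fun a b => v2 (a, b)) l j - Psi Λ (fun a b => v2 (a, b)) l j
          = (ν2 • v2) (l, j) := heigll
      rw [this]
      simp [smul_eq_mul]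
    have heigS2 : (fun j l => Theta (θ • Γ1) S2 j l - Psi Λ S2 j l)
        = fun j l => ν2 • S2 j l := by
      funext j l
      have hrepS2 := rep_lemma Γ1 Λ θ (fun q => v2 q + v2 (q.2, q.1)) j l
      rw [← hC2] at hrepS2
      have hScurry : (fun a b => (fun q : Fin N × Fin N => v2 q + v2 (q.2, q.1)) (a, b)) = S2 := by
        funext a b
        rw [hS2]
      rw [hScurry] at hrepS2
      rw [← hrepS2]
      have hadd : (fun q : Fin N × Fin N => v2 q + v2 (q.2, q.1))
          = v2 + (fun q => v2 (q.2, q.1)) := rfl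
      rw [hadd, Matrix.mulVec_add, Pi.add_apply]
      have h1 := congrFun heig2 (j, l)
      rw [h1, hswapeig (j, l)]
      rw [hS2]
      simp only [Pi.smul_apply, smul_eq_mul]
      ring
    have hν2le : ν2 ≤ -mu θ := hmu_top θ ν2 ⟨S2, hS2ne, hS2sym, heigS2⟩
    obtain ⟨Smu, hSmu, hSmusym, heqmu⟩ := hmu_eig θ
    set u : Fin N × Fin N → ℝ := fun p => Smu p.1 p.2 with hu
    have hune : u ≠ 0 := by
      intro h
      apply hSmu
      funext a b
      have := congrFun h (a, b)
      exact this
    have heigu : (Matrix.diagonal D2 + θ • C2) *ᵥ u = (-mu θ) • u := by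
      funext p
      obtain ⟨j, l⟩ := p
      rw [hC2, rep_lemma Γ1 Λ θ u j l]
      have hcur : (fun a b => u (a, b)) = Smu := by
        funext a b
        rw [hu]
      rw [hcur]
      have := congrFun (congrFun heqmu j) l
      rw [this]
      simp [hu, smul_eq_mul]
    have hmuge : D2 (jstar, jstar) - g / 2 ≤ -mu θ := le_trans hν2ge hν2le
    obtain ⟨-, hmu_est⟩ := eig_est D2 C2 (jstar, jstar) g hg hgap2 θ
      (by rw [← hE2]; exact h2small) (-mu θ) u hune heigu hmuge
    -- combine
    rw [hc11] at hmu_est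
    rw [hsum2] at hmu_est
    have hd2 : D2 (jstar, jstar) = -(Λ jstar + Λ jstar) := rfl
    rw [hd2] at hmu_est
    have hlam_est' : |(-lam θ) - (-Λ jstar + θ * Γ1 jstar jstar + θ ^ 2 * Ksum)|
        ≤ K1 * |θ| ^ 3 := by
      rw [← hsum1 θ]
      rw [hK1, hE1]
      exact hlam_est
    have hmu_est' : |(-mu θ) - (-(Λ jstar + Λ jstar) + θ * (2 * Γ1 jstar jstar)
        + θ ^ 2 * (4 * Ksum))| ≤ K2 * |θ| ^ 3 := by
      rw [hK2, hE2]
      exact hmu_est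
    have hA := abs_le.mp hmu_est'
    have hB := abs_le.mp hlam_est'
    rw [abs_le]
    constructor <;> linarith [hA.1, hA.2, hB.1, hB.2]
  -- conclusion
  constructor
  · rw [Asymptotics.isBigO_iff]
    refine ⟨K2 + 2 * K1, ?_⟩
    have hball : Metric.ball (0:ℝ) θ0 ∈ nhds (0:ℝ) := Metric.ball_mem_nhds 0 hθ0
    filter_upwards [hball] with θ hθ
    have habs : |θ| ≤ θ0 := by
      rw [Metric.mem_ball, Real.dist_eq, sub_zero] at hθ
      exact le_of_lt hθ
    have := main θ habs
    rw [Real.norm_eq_abs, Real.norm_eq_abs, abs_pow]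
    exact this
  · intro hirr
    -- Ksum is positive
    have hΓss : Γ1 jstar jstar ≤ 0 := by
      rw [hrow jstar]
      have : 0 ≤ ∑ l ∈ univ.erase jstar, Γ1 jstar l :=
        Finset.sum_nonneg fun l hl =>
          hoff jstar l (fun h => (Finset.ne_of_mem_erase hl) h.symm)
      linarith
    have hKpos : 0 < Ksum := by
      obtain ⟨j0, hj0⟩ := hNE
      have hj0ne : j0 ≠ jstar := Finset.ne_of_mem_erase hj0
      have hreach := hirr j0 jstar
      have hedge : ∃ a, a ≠ jstar ∧ 0 < Γ1 a jstar := by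
        rcases hreach.cases_tail with h | ⟨c, _, hcb⟩
        · exact absurd h.symm hj0ne
        · by_cases hc : c = jstar
          · rw [hc] at hcb
            linarith
          · exact ⟨c, hc, hcb⟩
      obtain ⟨a, ha, hpos⟩ := hedge
      rw [hKsum]
      refine Finset.sum_pos' (fun j hj => ?_) ⟨a, Finset.mem_erase.mpr ⟨ha, Finset.mem_univ a⟩, ?_⟩
      · apply div_nonneg (sq_nonneg _)
        have := hmin j (Finset.ne_of_mem_erase hj)
        linarith
      · apply div_pos (by positivity)
        have := hmin a ha
        linarith
    set Ktot : ℝ := K2 + 2 * K1 with hKtot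
    have hKtotn : 0 ≤ Ktot := by rw [hKtot]; linarith
    have hKt1 : (0:ℝ) < Ktot + 1 := by linarith
    refine ⟨min θ0 (Ksum / (Ktot + 1)), lt_min hθ0 (div_pos hKpos hKt1), ?_⟩
    intro θ hθpos hθlt
    have hθ1 : θ < θ0 := lt_of_lt_of_le hθlt (min_le_left _ _)
    have hθ2 : θ < Ksum / (Ktot + 1) := lt_of_lt_of_le hθlt (min_le_right _ _)
    have habs : |θ| ≤ θ0 := by
      rw [abs_of_pos hθpos]
      exact le_of_lt hθ1
    have hmain := main θ habs
    rw [abs_of_pos hθpos] at hmain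
    have h1 := (abs_le.mp hmain).2
    have hKθ : Ktot * θ < Ksum := by
      rw [lt_div_iff₀ hKt1, mul_comm] at hθ2
      have hstep : Ktot * θ < (Ktot + 1) * θ :=
        mul_lt_mul_of_pos_right (lt_add_one Ktot) hθpos
      linarith
    have hθ2pos : (0:ℝ) < θ ^ 2 := by positivity
    have h3 : θ ^ 2 * (Ktot * θ) < θ ^ 2 * Ksum :=
      mul_lt_mul_of_pos_left hKθ hθ2pos
    have e1 : θ ^ 2 * (Ktot * θ) = Ktot * θ ^ 3 := by ring
    rw [e1] at h3
    have h4 : 0 < θ ^ 2 * Ksum := mul_pos hθ2pos hKpos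
    linarith [h1, h3, h4]
end
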